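/- arXiv:2206.15434 — 5 statements merged into one kernel-verified Lean document; each statement's English description precedes it below -/
import Mathlib

section
/- Define for each integer j ≥ 0 the formal power series g_{2j-1}(t) = Σ_{n≥0} C(n+j,n)·C(n+j-1,n)·n!·t^n and g_{2j}(t) = Σ_{n≥0} C(n+j,n)²·n!·t^n (over ℚ), and set α_{2j-1} = α_{2j} = j. Then for all k ≥ 0, g_k(t) − g_{k-1}(t) = α_{k+1}·t·g_{k+1}(t), where g_{-1}(t) = 1. -/
open PowerSeries

/-- The series `g_k` of the Euler–Gauss recurrence for `Σ n! tⁿ`: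
for `k = 2j-1` (odd), coefficient of `tⁿ` is `C(n+j,n)·C(n+j-1,n)·n!`;
for `k = 2j` (even), it is `C(n+j,n)²·n!`.  Note that the odd formula with
`j = 0` (i.e. `k = -1`) gives the constant series `1`. -/
noncomputable def eulerG (k : ℤ) : PowerSeries ℚ :=
  PowerSeries.mk fun n =>
    letI j : ℕ := ((k + 1) / 2).toNat
    if k % 2 = 0 then ((Nat.choose (n + j) n : ℚ)) ^ 2 * (n.factorial : ℚ)
    else (Nat.choose (n + j) n : ℚ) * (Nat.choose (n + j - 1) n : ℚ) * (n.factorial : ℚ)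

/-- The coefficients `α_{2j-1} = α_{2j} = j`, i.e. `α_k = ⌈k/2⌉`. -/
def eulerAlpha (k : ℤ) : ℚ := (((k + 1) / 2 : ℤ) : ℚ)

lemma eulerG_odd_eq (j : ℕ) :
    eulerG (2 * (j : ℤ) - 1) = PowerSeries.mk fun n =>
      ((n + j).choose n : ℚ) * ((n + j - 1).choose n : ℚ) * n.factorial := by
  have h1 : (2 * (j : ℤ) - 1) % 2 = 1 := by omega
  have h2 : ((2 * (j : ℤ) - 1 + 1) / 2).toNat = j := by omega
  unfold eulerG
  rw [h2]
  simp [h1]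

lemma eulerG_even_eq (j : ℕ) :
    eulerG (2 * (j : ℤ)) = PowerSeries.mk fun n =>
      ((n + j).choose n : ℚ) ^ 2 * n.factorial := by
  have h1 : (2 * (j : ℤ)) % 2 = 0 := by omega
  have h2 : ((2 * (j : ℤ) + 1) / 2).toNat = j := by omega
  unfold eulerG
  rw [h2]
  simp [h1]

lemma euler_core (n j : ℕ) :
    ((n : ℚ) + 1) * (n + 1 + j).choose (n + 1) = ((j : ℚ) + 1) * (n + 1 + j).choose n := by
  have key : (n + 1) * (n + 1 + j).choose (n + 1) = (j + 1) * (n + 1 + j).choose n := by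
    have h1 : (n + j).succ * (n + j).choose n = (n + j + 1).choose (n + 1) * (n + 1) :=
      Nat.add_one_mul_choose_eq (n + j) n
    have h2 : (n + j).succ * (n + j).choose j = (n + j + 1).choose (j + 1) * (j + 1) :=
      Nat.add_one_mul_choose_eq (n + j) j
    have hs1 : (n + j).choose j = (n + j).choose n := by
      rw [← Nat.choose_symm (Nat.le_add_left j n)]
      congr 1; omega
    have hs2 : (n + j + 1).choose (j + 1) = (n + j + 1).choose n := by
      rw [← Nat.choose_symm (by omega : j + 1 ≤ n + j + 1)]
      congr 1; omega
    have e : n + 1 + j = n + j + 1 := by omega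
    rw [e]
    rw [hs1, hs2] at h2
    linarith [h1, h2]
  exact_mod_cast key

/-- Euler–Gauss recurrence: for all `k ≥ 0`,
`g_k(t) − g_{k-1}(t) = α_{k+1}·t·g_{k+1}(t)`, where `g_{-1} = 1`. -/
theorem eulerG_recurrence :
    (eulerG (-1) = 1) ∧
    ∀ k : ℤ, 0 ≤ k →
      eulerG k - eulerG (k - 1) =
        PowerSeries.C (R := ℚ) (eulerAlpha (k + 1)) * PowerSeries.X * eulerG (k + 1) := by
  constructor
  · have h := eulerG_odd_eq 0
    norm_num at h
    rw [h]
    ext n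
    cases n with
    | zero => simp
    | succ n =>
      simp [PowerSeries.coeff_one, Nat.choose_eq_zero_of_lt (Nat.lt_succ_self n)]
  · intro k hk
    lift k to ℕ using hk with m
    rcases Nat.even_or_odd m with ⟨j, hj⟩ | ⟨j, hj⟩
    · -- m = 2j
      have hm : (m : ℤ) = 2 * j := by omega
      have hm1 : (m : ℤ) - 1 = 2 * j - 1 := by omega
      have hα : eulerAlpha ((m : ℤ) + 1) = (j : ℚ) + 1 := by
        unfold eulerAlpha
        have : ((m : ℤ) + 1 + 1) / 2 = j + 1 := by omega
        rw [this]; push_cast; ring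
      have hG1 : eulerG ((m : ℤ) + 1) = PowerSeries.mk fun n =>
          ((n + (j + 1)).choose n : ℚ) * ((n + (j + 1) - 1).choose n : ℚ) * n.factorial := by
        have : (m : ℤ) + 1 = 2 * ((j : ℕ) + 1 : ℕ) - 1 := by push_cast; omega
        rw [this, eulerG_odd_eq]
      rw [hm] at hα hG1 ⊢
      rw [eulerG_even_eq, eulerG_odd_eq, hα, hG1]
      ext n
      rw [mul_assoc, PowerSeries.coeff_C_mul]
      cases n with
      | zero => simp
      | succ n =>
        rw [PowerSeries.coeff_succ_X_mul]
        simp only [map_sub, PowerSeries.coeff_mk]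
        have hP : ((n + 1 + j).choose (n + 1) : ℚ) =
            (n + j).choose n + (n + j).choose (n + 1) := by
          have : (n + 1 + j).choose (n + 1) = (n + j).choose n + (n + j).choose (n + 1) := by
            rw [show n + 1 + j = (n + j) + 1 from by omega, Nat.choose_succ_succ]
          exact_mod_cast this
        have e1 : n + 1 + j - 1 = n + j := by omega
        have e2 : n + (j + 1) = n + 1 + j := by omega
        have e3 : n + (j + 1) - 1 = n + j := by omega
        have e4 : ((n + 1).factorial : ℚ) = ((n : ℚ) + 1) * n.factorial := by
          rw [Nat.factorial_succ]; push_cast; ring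
        rw [e1, e3, e2, e4]
        have hc := euler_core n j
        linear_combination (((n + 1 + j).choose (n + 1) : ℚ) * ((n : ℚ) + 1) * n.factorial) * hP
          + (((n + j).choose n : ℚ) * n.factorial) * hc
    · -- m = 2j + 1
      have hm : (m : ℤ) = 2 * (j + 1 : ℕ) - 1 := by push_cast; omega
      have hm1 : (m : ℤ) - 1 = 2 * j := by omega
      have hm2 : (m : ℤ) + 1 = 2 * ((j : ℕ) + 1 : ℕ) := by push_cast; omega
      have hα : eulerAlpha ((m : ℤ) + 1) = (j : ℚ) + 1 := by
        unfold eulerAlpha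
        have : ((m : ℤ) + 1 + 1) / 2 = j + 1 := by omega
        rw [this]; push_cast; ring
      rw [hα]
      rw [show ((m : ℕ) : ℤ) = 2 * ((j : ℕ) + 1 : ℕ) - 1 from hm] at *
      rw [eulerG_odd_eq]
      rw [show (2 * ((j : ℕ) + 1 : ℕ) : ℤ) - 1 - 1 = 2 * (j : ℤ) from by push_cast; ring,
        eulerG_even_eq]
      rw [show (2 * ((j : ℕ) + 1 : ℕ) : ℤ) - 1 + 1 = 2 * ((j : ℕ) + 1 : ℕ) from by ring,
        eulerG_even_eq]
      ext n
      rw [mul_assoc, PowerSeries.coeff_C_mul]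
      cases n with
      | zero => simp
      | succ n =>
        rw [PowerSeries.coeff_succ_X_mul]
        simp only [map_sub, PowerSeries.coeff_mk]
        have hP : ((n + 1 + (j + 1)).choose (n + 1) : ℚ) =
            (n + 1 + j).choose n + (n + 1 + j).choose (n + 1) := by
          have h := Nat.choose_succ_succ (n + 1 + j) n
          have e : n + 1 + (j + 1) = (n + 1 + j) + 1 := by omega
          rw [e]
          exact_mod_cast h
        have e1 : n + 1 + (j + 1) - 1 = n + 1 + j := by omega
        have e2 : n + (j + 1) = n + 1 + j := by omega
        have e4 : ((n + 1).factorial : ℚ) = ((n : ℚ) + 1) * n.factorial := by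
          rw [Nat.factorial_succ]; push_cast; ring
        rw [e1, e2, e4]
        have hc := euler_core n j
        linear_combination (((n + 1 + j).choose (n + 1) : ℚ) * ((n : ℚ) + 1) * n.factorial) * hP
          + (((n + 1 + j).choose n : ℚ) * n.factorial) * hc
end

section
/- Fix a in a commutative ℚ-algebra. Define for j ≥ 0 the formal power series g_{2j-1}(t) = Σ_{n≥0} (a+j)^{(n)}·C(n+j-1,n)·t^n and g_{2j}(t) = Σ_{n≥0} (a+j)^{(n)}·C(n+j,n)·t^n, where x^{(n)} = x(x+1)···(x+n-1) is the rising factorial, and set α_{2j-1} = a+j-1, α_{2j} = j. Then for all k ≥ 0, g_k(t) − g_{k-1}(t) = α_{k+1}·t·g_{k+1}(t). -/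
open PowerSeries

variable {R : Type*}

/-- Rising factorial `x⁽ⁿ⁾ = x(x+1)⋯(x+n-1)`. -/
noncomputable def risingFac [CommRing R] (x : R) (n : ℕ) : R :=
  (ascPochhammer R n).eval x

/-- The series `g_k` of the Euler–Gauss recurrence for `Σ a⁽ⁿ⁾ tⁿ`:
for `k = 2j-1` (odd), coefficient of `tⁿ` is `(a+j)⁽ⁿ⁾·C(n+j-1,n)`;
for `k = 2j` (even), it is `(a+j)⁽ⁿ⁾·C(n+j,n)`.  The odd formula with `j = 0`
(`k = -1`) gives the constant series `1`. -/
noncomputable def eulerGa [CommRing R] [Algebra ℚ R] (a : R) (k : ℤ) : PowerSeries R :=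
  PowerSeries.mk fun n =>
    letI j : ℕ := ((k + 1) / 2).toNat
    if k % 2 = 0 then risingFac (a + (j : R)) n * (Nat.choose (n + j) n : R)
    else risingFac (a + (j : R)) n * (Nat.choose (n + j - 1) n : R)

/-- The coefficients `α_{2j-1} = a+j-1`, `α_{2j} = j`. -/
noncomputable def eulerAlphaA [CommRing R] [Algebra ℚ R] (a : R) (k : ℤ) : R :=
  if k % 2 = 0 then ((k / 2 : ℤ) : R)
  else a + (((k + 1) / 2 : ℤ) : R) - 1

lemma risingFac_succ_left [CommRing R] (x : R) (n : ℕ) :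
    risingFac x (n+1) = x * risingFac (x+1) n := by
  unfold risingFac
  rw [ascPochhammer_succ_left]
  simp [Polynomial.eval_comp]

lemma risingFac_succ_right [CommRing R] (x : R) (n : ℕ) :
    risingFac x (n+1) = risingFac x n * (x + n) := ascPochhammer_succ_eval n x

lemma coeff_eulerGa_even [CommRing R] [Algebra ℚ R] (a : R) (j n : ℕ) :
    coeff n (eulerGa a (2*(j:ℤ))) = risingFac (a + j) n * ((n+j).choose n : R) := by
  have h1 : ((2*(j:ℤ) + 1) / 2).toNat = j := by omega
  have h2 : (2*(j:ℤ)) % 2 = 0 := by omega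
  simp only [eulerGa, coeff_mk, h1, h2, if_pos]

lemma coeff_eulerGa_odd [CommRing R] [Algebra ℚ R] (a : R) (j n : ℕ) :
    coeff n (eulerGa a (2*(j:ℤ) - 1)) = risingFac (a + j) n * ((n+j-1).choose n : R) := by
  have h1 : ((2*(j:ℤ) - 1 + 1) / 2).toNat = j := by omega
  have h2 : ¬ ((2*(j:ℤ) - 1) % 2 = 0) := by omega
  simp only [eulerGa, coeff_mk, h1, h2, if_false]

lemma eulerAlphaA_even [CommRing R] [Algebra ℚ R] (a : R) (j : ℕ) :
    eulerAlphaA a (2*(j:ℤ)) = (j : R) := by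
  have h2 : (2*(j:ℤ)) % 2 = 0 := by omega
  have h3 : (2*(j:ℤ)) / 2 = (j:ℤ) := by omega
  simp [eulerAlphaA, h2, h3]

lemma eulerAlphaA_odd [CommRing R] [Algebra ℚ R] (a : R) (j : ℕ) :
    eulerAlphaA a (2*(j:ℤ) + 1) = a + (j : R) := by
  have h2 : ¬ ((2*(j:ℤ) + 1) % 2 = 0) := by omega
  have h3 : (2*(j:ℤ) + 1 + 1) / 2 = (j:ℤ) + 1 := by omega
  simp only [eulerAlphaA, h2, if_false, h3]
  push_cast
  ring

lemma choose_key (m j : ℕ) : (m+1) * (m+j+1).choose (m+1) = (j+1) * (m+j+1).choose m := by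
  have h := Nat.choose_succ_right_eq (m+j+1) j
  have h2 : (m+j+1).choose (m+1) = (m+j+1).choose j := by
    rw [← Nat.choose_symm (by omega : j ≤ m+j+1)]; congr 1; omega
  have h3 : (m+j+1).choose m = (m+j+1).choose (j+1) := by
    rw [← Nat.choose_symm (by omega : j+1 ≤ m+j+1)]; congr 1; omega
  have h4 : m+j+1-j = m+1 := by omega
  rw [h2, h3, mul_comm (m+1), mul_comm (j+1)]
  rw [h4] at h
  exact h.symm

/-- Euler–Gauss recurrence for rising powers: for all `k ≥ 0`,
`g_k(t) − g_{k-1}(t) = α_{k+1}·t·g_{k+1}(t)`. -/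
theorem eulerGa_recurrence [CommRing R] [Algebra ℚ R] (a : R) :
    ∀ k : ℤ, 0 ≤ k →
      eulerGa a k - eulerGa a (k - 1) =
        PowerSeries.C (eulerAlphaA a (k + 1)) * PowerSeries.X * eulerGa a (k + 1) := by
  intro k hk
  lift k to ℕ using hk
  obtain ⟨j, rfl | rfl⟩ := Nat.even_or_odd' k
  · -- k = 2j, even
    have hc : ((2*j : ℕ) : ℤ) = 2*(j:ℤ) := by push_cast; ring
    rw [hc]
    ext n
    have hg1 : 2*(j:ℤ) + 1 = 2*(((j+1:ℕ)):ℤ) - 1 := by push_cast; ring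
    rw [map_sub, coeff_eulerGa_even, coeff_eulerGa_odd, eulerAlphaA_odd, hg1,
      mul_assoc, coeff_C_mul]
    cases n with
    | zero => simp [risingFac]
    | succ m =>
      rw [coeff_succ_X_mul, coeff_eulerGa_odd]
      have e1 : m + 1 + j - 1 = m + j := by omega
      have e2 : m + (j+1) - 1 = m + j := by omega
      have e3 : m + 1 + j = m + j + 1 := by omega
      have pascal : (m+j+1).choose (m+1) = (m+j).choose m + (m+j).choose (m+1) :=
        Nat.choose_succ_succ (m+j) m
      rw [e1, e2, e3, pascal, risingFac_succ_left]
      push_cast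
      ring
  · -- k = 2j+1, odd
    have hc : ((2*j+1 : ℕ) : ℤ) = 2*(j:ℤ) + 1 := by push_cast; ring
    rw [hc]
    ext n
    have hg0 : 2*(j:ℤ) + 1 = 2*(((j+1:ℕ)):ℤ) - 1 := by push_cast; ring
    have hg1 : 2*(j:ℤ) + 1 - 1 = 2*(j:ℤ) := by ring
    have hg2 : 2*(j:ℤ) + 1 + 1 = 2*(((j+1:ℕ)):ℤ) := by push_cast; ring
    rw [map_sub, hg1, hg2, hg0, coeff_eulerGa_odd, coeff_eulerGa_even, eulerAlphaA_even,
      mul_assoc, coeff_C_mul]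
    cases n with
    | zero => simp [risingFac]
    | succ m =>
      rw [coeff_succ_X_mul, coeff_eulerGa_even]
      have e1 : m + 1 + (j+1) - 1 = m + j + 1 := by omega
      have e2 : m + (j+1) = m + j + 1 := by omega
      have e3 : m + 1 + j = m + j + 1 := by omega
      rw [e1, e2, e3, risingFac_succ_right, risingFac_succ_left]
      have hkey := choose_key m j
      have hkeyR : ((m:R)+1) * ((m+j+1).choose (m+1) : R) = ((j:R)+1) * ((m+j+1).choose m : R) := by
        exact_mod_cast congrArg (Nat.cast : ℕ → R) hkey
      push_cast
      push_cast at hkeyR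
      rw [show a + ((j:R) + 1) = a + (j:R) + 1 from by ring]
      linear_combination risingFac (a + (j:R) + 1) m * hkeyR
end

section
/- Define for j ≥ 0 the formal power series g_{2j-1}(t) = Σ_{n≥0} [n+j-1,n]_q · q^{n(n+2j-1)/2} · t^n and g_{2j}(t) = Σ_{n≥0} [n+j,n]_q · q^{n(n+2j-1)/2} · t^n (with g_{-1} = 1), and set α_{2j-1} = q^{2j-2} and α_{2j} = q^{j-1}(q^j − 1). Then for all k ≥ 0, g_k(t) − g_{k-1}(t) = α_{k+1}·t·g_{k+1}(t). -/
open PowerSeries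

/-- The indeterminate `q`, as an element of the field `ℚ(q)`. -/
noncomputable def qq : RatFunc ℚ := RatFunc.X

/-- The q-Pochhammer symbol `(q;q)_n = ∏_{j=0}^{n-1} (1 − q^{j+1})`. -/
noncomputable def qPoch (n : ℕ) : RatFunc ℚ :=
  ∏ j ∈ Finset.range n, (1 - qq ^ (j + 1))

/-- The Gaussian (q-)binomial coefficient `[n,k]_q`, vanishing when `k < 0` or `k > n`. -/
noncomputable def qBinom (n k : ℤ) : RatFunc ℚ :=
  if 0 ≤ k ∧ k ≤ n then qPoch n.toNat / (qPoch k.toNat * qPoch (n - k).toNat) else 0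

/-- The series `g_k` for the partial theta function:
`g_{2j-1}(t) = Σ [n+j-1,n]_q q^{n(n+2j-1)/2} tⁿ`,
`g_{2j}(t) = Σ [n+j,n]_q q^{n(n+2j-1)/2} tⁿ`, and `g_{-1} = 1`. -/
noncomputable def thetaG (k : ℤ) : PowerSeries (RatFunc ℚ) :=
  if k = -1 then 1 else
  PowerSeries.mk fun n =>
    letI j : ℤ := (k + 1) / 2
    (if k % 2 = 0 then qBinom ((n : ℤ) + j) (n : ℤ)
     else qBinom ((n : ℤ) + j - 1) (n : ℤ)) *
      qq ^ ((n : ℤ) * ((n : ℤ) + 2 * j - 1) / 2)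

/-- The coefficients `α_{2j-1} = q^{2j-2}` and `α_{2j} = q^{j-1}(q^j − 1)`. -/
noncomputable def thetaAlpha (k : ℤ) : RatFunc ℚ :=
  if k % 2 = 0 then qq ^ (k / 2 - 1) * (qq ^ (k / 2) - 1)
  else qq ^ (k - 1)

lemma one_sub_qq_pow_ne_zero (m : ℕ) : (1 : RatFunc ℚ) - qq ^ (m+1) ≠ 0 := by
  have : (1 : RatFunc ℚ) - qq ^ (m+1) =
      algebraMap (Polynomial ℚ) (RatFunc ℚ) (1 - Polynomial.X ^ (m+1)) := by
    rw [map_sub, map_one, map_pow]; rfl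
  rw [this]
  apply RatFunc.algebraMap_ne_zero
  intro h
  have := congrArg (fun p => Polynomial.coeff p 0) h
  simp [Polynomial.coeff_X_pow] at this

lemma qPoch_ne_zero (n : ℕ) : qPoch n ≠ 0 := by
  unfold qPoch
  exact Finset.prod_ne_zero_iff.mpr fun j _ => one_sub_qq_pow_ne_zero j

lemma qPoch_succ (n : ℕ) : qPoch (n+1) = qPoch n * (1 - qq ^ (n+1)) :=
  Finset.prod_range_succ _ n

lemma qPoch_zero : qPoch 0 = 1 := rfl

lemma qBinom_nat (a b : ℕ) (h : b ≤ a) :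
    qBinom (a : ℤ) (b : ℤ) = qPoch a / (qPoch b * qPoch (a - b)) := by
  have h2 : ((a:ℤ) - (b:ℤ)).toNat = a - b := by omega
  unfold qBinom
  rw [if_pos ⟨Int.natCast_nonneg b, by exact_mod_cast h⟩, h2, Int.toNat_natCast,
    Int.toNat_natCast]

lemma qBinom_self (a : ℕ) : qBinom (a : ℤ) (a : ℤ) = 1 := by
  rw [qBinom_nat a a le_rfl]
  simp [qPoch_zero, div_self (qPoch_ne_zero a)]

lemma qBinom_zero_right (a : ℕ) : qBinom (a : ℤ) 0 = 1 := by
  have := qBinom_nat a 0 (Nat.zero_le a)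
  simpa [qPoch_zero, div_self (qPoch_ne_zero a)] using this

lemma qBinom_of_lt (a b : ℤ) (h : a < b) : qBinom a b = 0 := by
  unfold qBinom
  rw [if_neg]; omega

-- key even identity: [m+1+j, m+1] - [m+j, m+1] = q^j [m+j, m]
lemma key_even (m j : ℕ) :
    qBinom ((m:ℤ)+1+j) ((m:ℤ)+1) - qBinom ((m:ℤ)+j) ((m:ℤ)+1)
      = qq ^ j * qBinom ((m:ℤ)+j) (m:ℤ) := by
  cases j with
  | zero =>
    simp only [Nat.cast_zero, add_zero, pow_zero, one_mul]
    rw [qBinom_of_lt (m:ℤ) ((m:ℤ)+1) (by omega),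
      show ((m:ℤ)+1) = ((m+1:ℕ):ℤ) by push_cast; ring, qBinom_self, qBinom_self]
    ring
  | succ i =>
    rw [show ((m:ℤ)+1+(i+1:ℕ)) = ((m+i+1+1:ℕ):ℤ) by push_cast; ring,
      show ((m:ℤ)+(i+1:ℕ)) = ((m+i+1:ℕ):ℤ) by push_cast; ring,
      show ((m:ℤ)+1) = ((m+1:ℕ):ℤ) by push_cast; ring]
    rw [qBinom_nat _ _ (by omega), qBinom_nat _ _ (by omega), qBinom_nat _ _ (by omega)]
    rw [show m+i+1+1 - (m+1) = i+1 by omega, show m+i+1 - (m+1) = i by omega,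
      show m+i+1 - m = i+1 by omega]
    rw [qPoch_succ (m+i+1), qPoch_succ m, qPoch_succ i]
    have h1 := qPoch_ne_zero m
    have h2 := qPoch_ne_zero i
    have h3 := one_sub_qq_pow_ne_zero m
    have h4 := one_sub_qq_pow_ne_zero i
    field_simp
    ring

-- key odd identity: [m+j+1, m+1] * (q^{m+1} - 1) = [m+j+1, m] * (q^{j+1} - 1)
lemma key_odd (m j : ℕ) :
    qBinom ((m:ℤ)+j+1) ((m:ℤ)+1) * (qq ^ (m+1) - 1)
      = qBinom ((m:ℤ)+j+1) (m:ℤ) * (qq ^ (j+1) - 1) := by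
  rw [show ((m:ℤ)+j+1) = ((m+j+1:ℕ):ℤ) by push_cast; ring,
    show ((m:ℤ)+1) = ((m+1:ℕ):ℤ) by push_cast; ring]
  rw [qBinom_nat _ _ (by omega), qBinom_nat _ _ (by omega)]
  rw [show m+j+1 - (m+1) = j by omega, show m+j+1 - m = j+1 by omega]
  rw [qPoch_succ m, qPoch_succ j]
  have h1 := qPoch_ne_zero m
  have h2 := qPoch_ne_zero j
  have h3 := one_sub_qq_pow_ne_zero m
  have h4 := one_sub_qq_pow_ne_zero j
  field_simp
  ring

lemma two_dvd_mul_pred (n : ℕ) : 2 * (n*(n-1)/2) = n*(n-1) := by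
  cases n with
  | zero => simp
  | succ m =>
    obtain ⟨c, hc⟩ : Even ((m+1)*m) := by simpa [mul_comm] using Nat.even_mul_succ_self m
    simp only [Nat.add_sub_cancel]
    omega

lemma tri (m : ℕ) : (m+1)*m/2 = m*(m-1)/2 + m := by
  cases m with
  | zero => rfl
  | succ s =>
    rw [show (s+1+1)*(s+1) = (s+1)*s + (s+1)*2 by ring,
      Nat.add_mul_div_right _ _ (by norm_num), show s+1-1 = s from rfl]

lemma exp_eq (n j : ℕ) :
    ((n:ℤ) * ((n:ℤ) + 2*(j:ℤ) - 1)) / 2 = ((n*(n-1)/2 + j*n : ℕ) : ℤ) := by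
  cases n with
  | zero => simp
  | succ m =>
    have h2a : 2 * ((m+1)*((m+1)-1)/2) = (m+1)*((m+1)-1) := two_dvd_mul_pred (m+1)
    simp only [Nat.add_sub_cancel] at h2a
    have hz : ((m+1)*m : ℕ) = 2 * (((m+1)*m/2 : ℕ) : ℤ) := by exact_mod_cast h2a.symm
    have key : ((m+1:ℕ):ℤ) * (((m+1:ℕ):ℤ) + 2*(j:ℤ) - 1)
        = 2 * (((m+1)*m/2 + j*(m+1) : ℕ) : ℤ) := by
      push_cast
      push_cast at hz
      linear_combination hz
    rw [key, Int.mul_ediv_cancel_left _ two_ne_zero]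
    norm_num

lemma thetaG_coeff_even (j n : ℕ) :
    coeff n (thetaG (2*(j:ℤ))) = qBinom ((n:ℤ)+j) (n:ℤ) * qq ^ (n*(n-1)/2 + j*n) := by
  rw [thetaG, if_neg (by omega)]
  simp only [coeff_mk]
  rw [if_pos (by omega : (2*(j:ℤ)) % 2 = 0), show (2*(j:ℤ)+1)/2 = (j:ℤ) by omega,
    exp_eq n j, zpow_natCast]

lemma thetaG_coeff_odd (j n : ℕ) :
    coeff n (thetaG (2*(j:ℤ)+1)) = qBinom ((n:ℤ)+j) (n:ℤ) * qq ^ (n*(n-1)/2 + (j+1)*n) := by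
  rw [thetaG, if_neg (by omega)]
  simp only [coeff_mk]
  rw [if_neg (by omega : ¬ (2*(j:ℤ)+1) % 2 = 0), show (2*(j:ℤ)+1+1)/2 = (j:ℤ)+1 by omega]
  have h : (n:ℤ) + ((j:ℤ)+1) - 1 = (n:ℤ) + j := by ring
  have h2 : (n:ℤ) * ((n:ℤ) + 2*((j:ℤ)+1) - 1) / 2 = ((n*(n-1)/2 + (j+1)*n : ℕ) : ℤ) := by
    have := exp_eq n (j+1)
    push_cast at this ⊢
    convert this using 3
  rw [h, h2, zpow_natCast]

lemma thetaAlpha_odd (j : ℕ) : thetaAlpha (2*(j:ℤ)+1) = qq ^ (2*j) := by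
  rw [thetaAlpha, if_neg (by omega), show (2*(j:ℤ)+1-1) = ((2*j : ℕ):ℤ) by push_cast; ring,
    zpow_natCast]

lemma thetaAlpha_even (j : ℕ) : thetaAlpha (2*(j:ℤ)+2) = qq ^ j * (qq ^ (j+1) - 1) := by
  rw [thetaAlpha, if_pos (by omega), show (2*(j:ℤ)+2)/2 = (j:ℤ)+1 by omega,
    show ((j:ℤ)+1-1) = ((j:ℕ):ℤ) by push_cast; ring, zpow_natCast,
    show ((j:ℤ)+1) = ((j+1:ℕ):ℤ) by push_cast; ring, zpow_natCast]

/-- Euler–Gauss recurrence for the partial theta function: for all `k ≥ 0`,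
`g_k(t) − g_{k-1}(t) = α_{k+1}·t·g_{k+1}(t)`. -/
theorem thetaG_recurrence :
    ∀ k : ℤ, 0 ≤ k →
      thetaG k - thetaG (k - 1) =
        PowerSeries.C (thetaAlpha (k + 1)) * PowerSeries.X * thetaG (k + 1) := by
  intro k hk
  lift k to ℕ using hk
  obtain ⟨j, rfl | rfl⟩ := Nat.even_or_odd' k
  · -- k = 2j, even case
    ext n
    rw [map_sub, mul_assoc, coeff_C_mul]
    rw [show ((2*j : ℕ):ℤ) = 2*(j:ℤ) by push_cast; ring]
    rw [thetaG_coeff_even j n, thetaAlpha_odd j]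
    cases n with
    | zero =>
      rw [coeff_zero_X_mul]
      cases j with
      | zero =>
        rw [show (2*((0:ℕ):ℤ)) - 1 = -1 by norm_num, thetaG, if_pos rfl]
        have h0 := qBinom_zero_right 0
        norm_num at h0
        simp [h0]
      | succ i =>
        rw [show (2*((i+1:ℕ):ℤ)) - 1 = 2*(i:ℤ)+1 by push_cast; ring, thetaG_coeff_odd i 0]
        simp only [Nat.cast_zero, zero_add, Nat.zero_mul, Nat.mul_zero, Nat.zero_div,
          pow_zero, mul_one, add_zero, mul_zero]
        rw [qBinom_zero_right (i+1), qBinom_zero_right i]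
        ring
    | succ m =>
      rw [coeff_succ_X_mul]
      cases j with
      | zero =>
        rw [show (2*((0:ℕ):ℤ)) - 1 = -1 by norm_num, thetaG, if_pos rfl,
          show (2*((0:ℕ):ℤ)) + 1 = 2*((0:ℕ):ℤ)+1 from rfl, thetaG_coeff_odd 0 m]
        simp only [Nat.cast_zero, add_zero, zero_mul, Nat.mul_zero, Nat.zero_mul, add_zero,
          coeff_one, Nat.succ_ne_zero, if_false, sub_zero, mul_zero, pow_zero, one_mul,
          Nat.cast_succ, zero_add, one_mul]
        rw [show ((m:ℤ)+1) = ((m+1:ℕ):ℤ) by push_cast; ring, qBinom_self (m+1), qBinom_self m]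
        simp only [Nat.add_sub_cancel, one_mul]
        rw [tri m]
      | succ i =>
        rw [show (2*((i+1:ℕ):ℤ)) - 1 = 2*(i:ℤ)+1 by push_cast; ring, thetaG_coeff_odd i (m+1),
          show (2*((i+1:ℕ):ℤ)) + 1 = 2*((i+1:ℕ):ℤ)+1 by push_cast; ring,
          thetaG_coeff_odd (i+1) m]
        simp only [Nat.add_sub_cancel]
        rw [tri m]
        have h := key_even m (i+1)
        push_cast at h ⊢
        rw [show (m:ℤ)+1+(i:ℤ) = (m:ℤ)+((i:ℤ)+1) by ring]
        linear_combination qq ^ (m*(m-1)/2 + m + (i+1)*(m+1)) * h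
  · -- k = 2j+1, odd case
    ext n
    rw [map_sub, mul_assoc, coeff_C_mul]
    rw [show ((2*j+1 : ℕ):ℤ) = 2*(j:ℤ)+1 by push_cast; ring]
    rw [thetaG_coeff_odd j n,
      show (2*(j:ℤ)+1) - 1 = 2*(j:ℤ) by ring, thetaG_coeff_even j n,
      show (2*(j:ℤ)+1) + 1 = 2*(j:ℤ)+2 by ring, thetaAlpha_even j]
    cases n with
    | zero =>
      rw [coeff_zero_X_mul]
      simp
    | succ m =>
      rw [coeff_succ_X_mul,
        show 2*(j:ℤ)+2 = 2*((j+1:ℕ):ℤ) by push_cast; ring, thetaG_coeff_even (j+1) m]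
      simp only [Nat.add_sub_cancel]
      rw [tri m]
      have h := key_odd m j
      push_cast at h ⊢
      rw [show (m:ℤ)+1+(j:ℤ) = (m:ℤ)+(j:ℤ)+1 by ring,
        show (m:ℤ)+((j:ℤ)+1) = (m:ℤ)+(j:ℤ)+1 by ring]
      linear_combination qq ^ (m*(m-1)/2 + m + j*(m+1)) * h
end

section
/- In the ring of formal power series over a commutative ℚ-algebra containing a, the identity (1−t−u)^{−a} = (1−t)^{−a}·(1−u)^{−a}·Σ_{k≥0} C(a+k−1,k)·(t/(1−t))^k·(u/(1−u))^k holds in the formal power series ring in two variables t, u, where (1−s)^{−a} = Σ_{n≥0} a^{(n)} s^n/n! and C(a+k−1,k) = a^{(k)}/k!. -/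
open Polynomial Finset


open PowerSeries

variable {R : Type*}

/-- Substitution `f(g)` of a two-variable series `g` with zero constant term
into a one-variable series `f` (each coefficient is a finite sum since `gⁿ`
has order `≥ n`). -/
noncomputable def psubst [CommRing R] (g : MvPowerSeries (Fin 2) R) (f : PowerSeries R) :
    MvPowerSeries (Fin 2) R :=
  fun e => ∑ n ∈ Finset.range (e.sum (fun _ m => m) + 1),
    MvPowerSeries.coeff e (MvPowerSeries.C (σ := Fin 2) (R := R) (PowerSeries.coeff n f) * g ^ n)

/-- The series `f` regarded as a series in the variable `Xᵢ` of `R[[t,u]]`. -/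
noncomputable def embed [CommRing R] (i : Fin 2) (f : PowerSeries R) :
    MvPowerSeries (Fin 2) R :=
  psubst (MvPowerSeries.X i) f

/-- The binomial series `(1−s)^{−a} = Σ_{n≥0} a⁽ⁿ⁾ sⁿ/n!`, where
`a⁽ⁿ⁾ = a(a+1)⋯(a+n−1)` is the rising factorial. -/
noncomputable def binomSeries [CommRing R] [Algebra ℚ R] (a : R) : PowerSeries R :=
  PowerSeries.mk fun n => ((n.factorial : ℚ)⁻¹) • (ascPochhammer R n).eval a

/-- The series `s/(1−s) = Σ_{n≥1} sⁿ`. -/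
noncomputable def geomSeries [CommRing R] : PowerSeries R :=
  PowerSeries.mk fun n => if n = 0 then 0 else 1

section Aux
variable [CommRing R]


lemma AP_succ_left (n : ℕ) (a : R) :
    (ascPochhammer R (n+1)).eval a = a * (ascPochhammer R n).eval (a+1) := by
  rw [ascPochhammer_succ_left, eval_mul, eval_X, eval_comp, eval_add, eval_X, eval_one]

lemma AP_mul (k m : ℕ) (a : R) :
    (ascPochhammer R k).eval a * (ascPochhammer R m).eval (a + k)
      = (ascPochhammer R (k+m)).eval a := by
  rw [← ascPochhammer_mul, eval_mul, eval_comp, eval_add, eval_X, eval_natCast]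

lemma diamond (j : ℕ) : ∀ (i : ℕ) (a : R),
    (ascPochhammer R (i+j)).eval a
      = ∑ n ∈ Finset.range (j+1),
          ((i.choose n * j.choose n * n.factorial : ℕ) : R) *
            ((ascPochhammer R n).eval a * (ascPochhammer R (i-n)).eval (a+n) *
             (ascPochhammer R (j-n)).eval (a+n)) := by
  induction j with
  | zero => intro i a; simp [ascPochhammer_zero]
  | succ j ih =>
    intro i a
    have hsplit : ∑ n ∈ Finset.range (j+2),
          ((i.choose n * (j+1).choose n * n.factorial : ℕ) : R) *
            ((ascPochhammer R n).eval a * (ascPochhammer R (i-n)).eval (a+n) *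
             (ascPochhammer R ((j+1)-n)).eval (a+n))
        = (∑ n ∈ Finset.range (j+2),
            ((i.choose n * j.choose n * n.factorial : ℕ) : R) *
            ((ascPochhammer R n).eval a * (ascPochhammer R (i-n)).eval (a+n) *
             (ascPochhammer R ((j+1)-n)).eval (a+n)))
          + ∑ m ∈ Finset.range (j+1),
            ((i.choose (m+1) * j.choose m * (m+1).factorial : ℕ) : R) *
            ((ascPochhammer R (m+1)).eval a * (ascPochhammer R (i-(m+1))).eval (a+(m+1)) *
             (ascPochhammer R (j-m)).eval (a+(m+1))) := by
      rw [Finset.sum_range_succ' _ (j+1), Finset.sum_range_succ' (fun n => ((i.choose n * j.choose n * n.factorial : ℕ) : R) *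
            ((ascPochhammer R n).eval a * (ascPochhammer R (i-n)).eval (a+n) *
             (ascPochhammer R ((j+1)-n)).eval (a+n))) (j+1)]
      simp only [Nat.choose_succ_succ j]
      push_cast
      ring_nf
      simp only [Nat.choose_zero_right]
      simp only [Nat.succ_eq_add_one, Finset.sum_add_distrib]
      ring_nf
    rw [hsplit]
    have hA : ∑ n ∈ Finset.range (j+2),
            ((i.choose n * j.choose n * n.factorial : ℕ) : R) *
            ((ascPochhammer R n).eval a * (ascPochhammer R (i-n)).eval (a+n) *
             (ascPochhammer R ((j+1)-n)).eval (a+n))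
        = (ascPochhammer R (i+j)).eval a * (a + j) := by
      rw [Finset.sum_range_succ]
      simp only [Nat.choose_succ_self, mul_zero, zero_mul, Nat.cast_zero, add_zero]
      rw [ih i a, Finset.sum_mul]
      apply Finset.sum_congr rfl
      intro n hn
      have hn' : n ≤ j := by simpa [Nat.lt_succ_iff] using hn
      have h1 : (j+1) - n = (j-n)+1 := by omega
      rw [h1, ascPochhammer_succ_eval]
      have h2 : (a + ↑n + ↑(j-n)) = a + ↑j := by
        rw [Nat.cast_sub hn']; ring
      rw [h2]; ring
    have hB : ∑ m ∈ Finset.range (j+1),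
            ((i.choose (m+1) * j.choose m * (m+1).factorial : ℕ) : R) *
            ((ascPochhammer R (m+1)).eval a * (ascPochhammer R (i-(m+1))).eval (a+(m+1)) *
             (ascPochhammer R (j-m)).eval (a+(m+1)))
        = (i : R) * (ascPochhammer R (i+j)).eval a := by
      cases i with
      | zero =>
        simp [Nat.choose_eq_zero_of_lt (Nat.succ_pos _)]
      | succ i' =>
        have hterm : ∀ m ∈ Finset.range (j+1),
            (((i'+1).choose (m+1) * j.choose m * (m+1).factorial : ℕ) : R) *
            ((ascPochhammer R (m+1)).eval a * (ascPochhammer R ((i'+1)-(m+1))).eval (a+(m+1)) *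
             (ascPochhammer R (j-m)).eval (a+(m+1)))
            = ((i'+1 : ℕ) : R) * (a *
                (((i'.choose m * j.choose m * m.factorial : ℕ) : R) *
                 ((ascPochhammer R m).eval (a+1) * (ascPochhammer R (i'-m)).eval ((a+1)+m) *
                  (ascPochhammer R (j-m)).eval ((a+1)+m)))) := by
          intro m _
          have h0 : (i'+1).choose (m+1) * (m+1) = (i'+1) * i'.choose m :=
            (Nat.add_one_mul_choose_eq i' m).symm
          have hc : (i'+1).choose (m+1) * (m+1).factorial = (i'+1) * (i'.choose m * m.factorial) := by
            rw [Nat.factorial_succ, ← mul_assoc, h0, mul_assoc]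
          have hsub : (i'+1)-(m+1) = i'-m := by omega
          have hcast : a + ((m:R)+1) = (a+1) + (m:R) := by ring
          rw [hsub, hcast, AP_succ_left m a]
          have : (i'+1).choose (m+1) * j.choose m * (m+1).factorial
              = (i'+1) * (i'.choose m * j.choose m * m.factorial) := by
            rw [mul_right_comm, hc]; ring
          rw [this]
          push_cast
          ring
        rw [Finset.sum_congr rfl hterm, ← Finset.mul_sum, ← Finset.mul_sum, ← ih i' (a+1)]
        have : i'+1+j = (i'+j)+1 := by omega
        rw [this, AP_succ_left (i'+j) a]
    rw [hA, hB, show i+(j+1) = (i+j)+1 by omega, ascPochhammer_succ_eval]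
    push_cast
    ring

section QAlg
variable [Algebra ℚ R]

lemma AP_sum_shift (n : ℕ) (a : R) :
    ∑ m ∈ Finset.range (n+1), ((m.factorial : ℚ)⁻¹) • (ascPochhammer R m).eval a
      = ((n.factorial : ℚ)⁻¹) • (ascPochhammer R n).eval (a+1) := by
  induction n with
  | zero => simp
  | succ n ih =>
    rw [Finset.sum_range_succ, ih, AP_succ_left n a, ascPochhammer_succ_eval]
    set x := (ascPochhammer R n).eval (a+1) with hxdef
    have key : ((((n+1).factorial : ℚ))⁻¹ * ((n+1 : ℕ) : ℚ)) = ((n.factorial : ℚ))⁻¹ := by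
      rw [Nat.factorial_succ]
      have h1 : ((n+1 : ℕ) : ℚ) ≠ 0 := by positivity
      have h2 : ((n.factorial : ℚ)) ≠ 0 := Nat.cast_ne_zero.mpr n.factorial_ne_zero
      push_cast
      field_simp
    have hc : ((n+1:ℕ):R) * x = ((n+1:ℕ):ℚ) • x := by
      rw [Nat.cast_smul_eq_nsmul, nsmul_eq_mul]
    have hsplit : x * (a + 1 + (n:R)) = a * x + ((n+1:ℕ):R) * x := by push_cast; ring
    rw [hsplit, smul_add, add_comm ((((n+1).factorial : ℚ))⁻¹ • (a*x))]
    congr 1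
    rw [hc, smul_smul, key]

lemma coeff_binomSeries (n : ℕ) (a : R) :
    PowerSeries.coeff n (PowerSeries.mk fun m => ((m.factorial : ℚ)⁻¹) • (ascPochhammer R m).eval a)
      = ((n.factorial : ℚ)⁻¹) • (ascPochhammer R n).eval a :=
  PowerSeries.coeff_mk _ _

lemma binom_one_coeff (n : ℕ) :
    ((n.factorial : ℚ)⁻¹) • ((ascPochhammer R n).eval (1:R)) = 1 := by
  rw [ascPochhammer_eval_one]
  have : ((n.factorial : ℕ) : R) = ((n.factorial : ℕ) : ℚ) • (1:R) := by
    rw [Nat.cast_smul_eq_nsmul, nsmul_eq_mul, mul_one]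
  rw [this, smul_smul, inv_mul_cancel₀ (Nat.cast_ne_zero.mpr n.factorial_ne_zero), one_smul]

end QAlg

open PowerSeries

section OneVar
variable [Algebra ℚ R]

lemma binom_coeff (n : ℕ) (a : R) :
    PowerSeries.coeff n (binomSeries a) = ((n.factorial : ℚ)⁻¹) • (ascPochhammer R n).eval a :=
  PowerSeries.coeff_mk _ _

lemma binom_zero : binomSeries (0:R) = 1 := by
  ext n
  rw [binom_coeff, ascPochhammer_eval_zero, PowerSeries.coeff_one]
  cases n with
  | zero => simp
  | succ n => simp

lemma binom_mul_one (a : R) : binomSeries a * binomSeries (1:R) = binomSeries (a+1) := by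
  ext n
  rw [PowerSeries.coeff_mul, binom_coeff]
  rw [Finset.Nat.sum_antidiagonal_eq_sum_range_succ_mk]
  have : ∀ k ∈ Finset.range (n+1),
      PowerSeries.coeff k (binomSeries a) * PowerSeries.coeff (n-k) (binomSeries (1:R))
        = ((k.factorial : ℚ)⁻¹) • (ascPochhammer R k).eval a := by
    intro k _
    rw [binom_coeff, binom_coeff, binom_one_coeff, mul_one]
  rw [Finset.sum_congr rfl this, AP_sum_shift]

lemma binom_mul_nat (a : R) (k : ℕ) :
    binomSeries a * (binomSeries (1:R))^k = binomSeries (a + k) := by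
  induction k with
  | zero => simp
  | succ k ih =>
    rw [pow_succ, ← mul_assoc, ih, binom_mul_one]
    norm_num [add_assoc]

lemma geom_eq : (geomSeries : PowerSeries R) = PowerSeries.X * binomSeries (1:R) := by
  ext n
  cases n with
  | zero =>
    rw [PowerSeries.coeff_zero_X_mul]
    simp [geomSeries, PowerSeries.coeff_mk]
  | succ n =>
    rw [PowerSeries.coeff_succ_X_mul, binom_coeff, binom_one_coeff]
    simp [geomSeries, PowerSeries.coeff_mk]

lemma binom_mul_geom_pow (a : R) (k : ℕ) :
    binomSeries a * (geomSeries : PowerSeries R)^k = PowerSeries.X^k * binomSeries (a + k) := by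
  rw [geom_eq, mul_pow, mul_left_comm, binom_mul_nat]

lemma coeff_binom_mul_geom_pow (a : R) (k m : ℕ) :
    PowerSeries.coeff m (binomSeries a * (geomSeries : PowerSeries R)^k)
      = if k ≤ m then (((m-k).factorial : ℚ)⁻¹) • (ascPochhammer R (m-k)).eval (a + k) else 0 := by
  rw [binom_mul_geom_pow, PowerSeries.coeff_X_pow_mul', ]
  split_ifs with h
  · rw [binom_coeff]
  · rfl

lemma coeff_geom_pow_zero (k m : ℕ) (h : m < k) :
    PowerSeries.coeff m ((geomSeries : PowerSeries R)^k) = 0 := by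
  have := coeff_binom_mul_geom_pow (0:R) k m
  rw [binom_zero, one_mul, if_neg (by omega)] at this
  exact this

end OneVar

section TwoVar
open MvPowerSeries

lemma fin2_decomp (e : Fin 2 →₀ ℕ) :
    e = Finsupp.single 0 (e 0) + Finsupp.single 1 (e 1) := by
  ext i
  fin_cases i <;> simp [Finsupp.single_apply]

lemma fin2_sum (e : Fin 2 →₀ ℕ) : e.sum (fun _ m => m) = e 0 + e 1 := by
  rw [Finsupp.sum_fintype _ _ (fun _ => rfl), Fin.sum_univ_two]

lemma fin2_single_add_apply0 (m r : ℕ) :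
    (Finsupp.single (0 : Fin 2) m + Finsupp.single (1 : Fin 2) r) 0 = m := by
  simp [Finsupp.single_apply]

lemma fin2_single_add_apply1 (m r : ℕ) :
    (Finsupp.single (0 : Fin 2) m + Finsupp.single (1 : Fin 2) r) 1 = r := by
  simp [Finsupp.single_apply]

lemma coeff_psubst (g : MvPowerSeries (Fin 2) R) (f : PowerSeries R) (e : Fin 2 →₀ ℕ) :
    MvPowerSeries.coeff e (psubst g f)
      = ∑ n ∈ Finset.range (e 0 + e 1 + 1),
          PowerSeries.coeff n f * MvPowerSeries.coeff e (g ^ n) := by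
  show psubst g f e = _
  unfold psubst
  rw [fin2_sum]
  apply Finset.sum_congr rfl
  intro n _
  rw [MvPowerSeries.coeff_C_mul]

lemma antidiag_split (e : Fin 2 →₀ ℕ) (F G : ℕ → ℕ → R) :
    ∑ p ∈ Finset.HasAntidiagonal.antidiagonal e, F (p.1 0) (p.2 0) * G (p.1 1) (p.2 1)
      = (∑ q ∈ Finset.HasAntidiagonal.antidiagonal (e 0), F q.1 q.2)
        * (∑ q ∈ Finset.HasAntidiagonal.antidiagonal (e 1), G q.1 q.2) := by
  rw [Finset.sum_mul_sum, ← Finset.sum_product']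
  apply Finset.sum_nbij' (i := fun (p : (Fin 2 →₀ ℕ) × (Fin 2 →₀ ℕ)) => ((p.1 0, p.2 0), (p.1 1, p.2 1)))
    (j := fun q => (Finsupp.single 0 q.1.1 + Finsupp.single 1 q.2.1,
                    Finsupp.single 0 q.1.2 + Finsupp.single 1 q.2.2))
  · intro p hp
    rw [Finset.HasAntidiagonal.mem_antidiagonal] at hp
    rw [Finset.mem_product, Finset.HasAntidiagonal.mem_antidiagonal, Finset.HasAntidiagonal.mem_antidiagonal]
    constructor
    · have := DFunLike.congr_fun hp (0 : Fin 2); simpa using this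
    · have := DFunLike.congr_fun hp (1 : Fin 2); simpa using this
  · intro q hq
    rw [Finset.mem_product, Finset.HasAntidiagonal.mem_antidiagonal, Finset.HasAntidiagonal.mem_antidiagonal] at hq
    rw [Finset.HasAntidiagonal.mem_antidiagonal]
    have : (Finsupp.single (0:Fin 2) q.1.1 + Finsupp.single (1:Fin 2) q.2.1)
        + (Finsupp.single (0:Fin 2) q.1.2 + Finsupp.single (1:Fin 2) q.2.2)
        = Finsupp.single (0:Fin 2) (q.1.1 + q.1.2) + Finsupp.single (1:Fin 2) (q.2.1 + q.2.2) := by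
      rw [Finsupp.single_add, Finsupp.single_add]; abel
    rw [this, hq.1, hq.2, ← fin2_decomp]
  · intro p hp
    rw [Prod.ext_iff]
    exact ⟨(fin2_decomp p.1).symm, (fin2_decomp p.2).symm⟩
  · intro q hq
    simp [fin2_single_add_apply0, fin2_single_add_apply1]
  · intro p hp
    rfl

end TwoVar

section TwoVar2
open MvPowerSeries

lemma embed0_coeff (f : PowerSeries R) (e : Fin 2 →₀ ℕ) :
    MvPowerSeries.coeff e (embed 0 f)
      = if e 1 = 0 then PowerSeries.coeff (e 0) f else 0 := by
  unfold embed
  rw [coeff_psubst]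
  have hterm : ∀ n, PowerSeries.coeff n f * MvPowerSeries.coeff e (MvPowerSeries.X (0:Fin 2) ^ n)
      = if e = Finsupp.single 0 n then PowerSeries.coeff n f else 0 := by
    intro n
    rw [MvPowerSeries.coeff_X_pow]
    split_ifs <;> simp
  split_ifs with h
  · have he : e = Finsupp.single 0 (e 0) := by
      ext i
      fin_cases i
      · simp [Finsupp.single_apply]
      · simp [Finsupp.single_apply, h]
    rw [Finset.sum_eq_single_of_mem (e 0) (by rw [Finset.mem_range]; omega)]
    · rw [hterm, if_pos he]
    · intro b _ hb
      rw [hterm, if_neg]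
      intro hcontra
      apply hb
      rw [hcontra]
      simp
  · apply Finset.sum_eq_zero
    intro n _
    rw [hterm, if_neg]
    intro hcontra
    apply h
    rw [hcontra]
    simp [Finsupp.single_apply]

lemma embed1_coeff (f : PowerSeries R) (e : Fin 2 →₀ ℕ) :
    MvPowerSeries.coeff e (embed 1 f)
      = if e 0 = 0 then PowerSeries.coeff (e 1) f else 0 := by
  unfold embed
  rw [coeff_psubst]
  have hterm : ∀ n, PowerSeries.coeff n f * MvPowerSeries.coeff e (MvPowerSeries.X (1:Fin 2) ^ n)
      = if e = Finsupp.single 1 n then PowerSeries.coeff n f else 0 := by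
    intro n
    rw [MvPowerSeries.coeff_X_pow]
    split_ifs <;> simp
  split_ifs with h
  · have he : e = Finsupp.single 1 (e 1) := by
      ext i
      fin_cases i
      · simp [Finsupp.single_apply, h]
      · simp [Finsupp.single_apply]
    rw [Finset.sum_eq_single_of_mem (e 1) (by rw [Finset.mem_range]; omega)]
    · rw [hterm, if_pos he]
    · intro b _ hb
      rw [hterm, if_neg]
      intro hcontra
      apply hb
      rw [hcontra]
      simp
  · apply Finset.sum_eq_zero
    intro n _
    rw [hterm, if_neg]
    intro hcontra
    apply h
    rw [hcontra]
    simp [Finsupp.single_apply]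

end TwoVar2

section TwoVar3
open MvPowerSeries

lemma sum_antidiag_right_zero (N : ℕ) (f : ℕ → R) :
    ∑ q ∈ Finset.HasAntidiagonal.antidiagonal N, f q.1 * (if q.2 = 0 then 1 else 0) = f N := by
  rw [Finset.sum_eq_single_of_mem ((N, 0))
    (by rw [Finset.HasAntidiagonal.mem_antidiagonal]; omega)]
  · simp
  · intro b hb hne
    rw [Finset.HasAntidiagonal.mem_antidiagonal] at hb
    have h2 : b.2 ≠ 0 := by
      intro h0
      apply hne
      rw [Prod.ext_iff]
      omega
    rw [if_neg h2, mul_zero]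

lemma sum_antidiag_left_zero (N : ℕ) (f : ℕ → R) :
    ∑ q ∈ Finset.HasAntidiagonal.antidiagonal N, (if q.1 = 0 then 1 else 0) * f q.2 = f N := by
  rw [Finset.sum_eq_single_of_mem ((0, N))
    (by rw [Finset.HasAntidiagonal.mem_antidiagonal]; omega)]
  · simp
  · intro b hb hne
    rw [Finset.HasAntidiagonal.mem_antidiagonal] at hb
    have h2 : b.1 ≠ 0 := by
      intro h0
      apply hne
      rw [Prod.ext_iff]
      omega
    rw [if_neg h2, zero_mul]

lemma sum_antidiag_both_zero (N : ℕ) :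
    ∑ q ∈ Finset.HasAntidiagonal.antidiagonal N, (if q.1 = 0 then (if q.2 = 0 then (1:R) else 0) else 0)
      = if N = 0 then 1 else 0 := by
  split_ifs with h
  · subst h; simp
  · apply Finset.sum_eq_zero
    intro q hq
    rw [Finset.HasAntidiagonal.mem_antidiagonal] at hq
    split_ifs with h1 h2
    · omega
    · rfl
    · rfl

lemma coeff_E0_mul_E1 (f g : PowerSeries R) (e : Fin 2 →₀ ℕ) :
    MvPowerSeries.coeff e (embed 0 f * embed 1 g)
      = PowerSeries.coeff (e 0) f * PowerSeries.coeff (e 1) g := by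
  rw [MvPowerSeries.coeff_mul]
  have hc : ∀ p ∈ Finset.HasAntidiagonal.antidiagonal e,
      MvPowerSeries.coeff p.1 (embed 0 f) * MvPowerSeries.coeff p.2 (embed 1 g)
        = (PowerSeries.coeff (p.1 0) f * (if p.2 0 = 0 then 1 else 0))
          * ((if p.1 1 = 0 then 1 else 0) * PowerSeries.coeff (p.2 1) g) := by
    intro p _
    rw [embed0_coeff, embed1_coeff]
    split_ifs <;> ring
  rw [Finset.sum_congr rfl hc,
    antidiag_split e (fun a b => PowerSeries.coeff a f * (if b = 0 then 1 else 0))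
      (fun c d => (if c = 0 then 1 else 0) * PowerSeries.coeff d g),
    sum_antidiag_right_zero (e 0) (fun n => PowerSeries.coeff n f),
    sum_antidiag_left_zero (e 1) (fun n => PowerSeries.coeff n g)]

lemma E0_mul (f g : PowerSeries R) : embed 0 f * embed 0 g = embed 0 (f * g) := by
  apply MvPowerSeries.ext
  intro e
  rw [MvPowerSeries.coeff_mul, embed0_coeff, PowerSeries.coeff_mul]
  have hc : ∀ p ∈ Finset.HasAntidiagonal.antidiagonal e,
      MvPowerSeries.coeff p.1 (embed 0 f) * MvPowerSeries.coeff p.2 (embed 0 g)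
        = (PowerSeries.coeff (p.1 0) f * PowerSeries.coeff (p.2 0) g)
          * (if p.1 1 = 0 then (if p.2 1 = 0 then 1 else 0) else 0) := by
    intro p _
    rw [embed0_coeff, embed0_coeff]
    split_ifs <;> ring
  rw [Finset.sum_congr rfl hc,
    antidiag_split e (fun a b => PowerSeries.coeff a f * PowerSeries.coeff b g)
      (fun c d => if c = 0 then (if d = 0 then 1 else 0) else 0),
    sum_antidiag_both_zero]
  split_ifs with h
  · rw [mul_one]
  · rw [mul_zero]

lemma E1_mul (f g : PowerSeries R) : embed 1 f * embed 1 g = embed 1 (f * g) := by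
  apply MvPowerSeries.ext
  intro e
  rw [MvPowerSeries.coeff_mul, embed1_coeff, PowerSeries.coeff_mul]
  have hc : ∀ p ∈ Finset.HasAntidiagonal.antidiagonal e,
      MvPowerSeries.coeff p.1 (embed 1 f) * MvPowerSeries.coeff p.2 (embed 1 g)
        = (if p.1 0 = 0 then (if p.2 0 = 0 then 1 else 0) else 0)
          * (PowerSeries.coeff (p.1 1) f * PowerSeries.coeff (p.2 1) g) := by
    intro p _
    rw [embed1_coeff, embed1_coeff]
    split_ifs <;> ring
  rw [Finset.sum_congr rfl hc,
    antidiag_split e (fun a b => if a = 0 then (if b = 0 then 1 else 0) else 0)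
      (fun c d => PowerSeries.coeff c f * PowerSeries.coeff d g),
    sum_antidiag_both_zero]
  split_ifs with h
  · rw [one_mul]
  · rw [zero_mul]

lemma fin2_eq_zero (e : Fin 2 →₀ ℕ) : (e = 0) ↔ (e 0 = 0 ∧ e 1 = 0) := by
  constructor
  · rintro rfl; simp
  · rintro ⟨h0, h1⟩
    ext i
    fin_cases i <;> simp [h0, h1]

lemma E0_one : embed 0 (1 : PowerSeries R) = 1 := by
  apply MvPowerSeries.ext
  intro e
  classical
  rw [embed0_coeff, MvPowerSeries.coeff_one, PowerSeries.coeff_one]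
  by_cases h0 : e 0 = 0 <;> by_cases h1 : e 1 = 0 <;>
    simp [h0, h1, fin2_eq_zero]

lemma E1_one : embed 1 (1 : PowerSeries R) = 1 := by
  apply MvPowerSeries.ext
  intro e
  classical
  rw [embed1_coeff, MvPowerSeries.coeff_one, PowerSeries.coeff_one]
  by_cases h0 : e 0 = 0 <;> by_cases h1 : e 1 = 0 <;>
    simp [h0, h1, fin2_eq_zero]

lemma E0_pow (f : PowerSeries R) (k : ℕ) : (embed 0 f) ^ k = embed 0 (f ^ k) := by
  induction k with
  | zero => simpa using E0_one.symm
  | succ k ih => rw [pow_succ, pow_succ, ih, E0_mul]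

lemma E1_pow (f : PowerSeries R) (k : ℕ) : (embed 1 f) ^ k = embed 1 (f ^ k) := by
  induction k with
  | zero => simpa using E1_one.symm
  | succ k ih => rw [pow_succ, pow_succ, ih, E1_mul]

end TwoVar3

section Assemble
open MvPowerSeries

lemma psubst_add_coeff (f : PowerSeries R) (e : Fin 2 →₀ ℕ) :
    MvPowerSeries.coeff e (psubst (MvPowerSeries.X 0 + MvPowerSeries.X 1) f)
      = (((e 0 + e 1).choose (e 0) : ℕ) : R) * PowerSeries.coeff (e 0 + e 1) f := by
  classical
  have hkey : ∀ n m : ℕ, (e = Finsupp.single 0 m + Finsupp.single 1 (n-m))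
      ↔ (m = e 0 ∧ n - m = e 1) := by
    intro n m
    constructor
    · intro h
      rw [h, fin2_single_add_apply0, fin2_single_add_apply1]
      exact ⟨rfl, rfl⟩
    · rintro ⟨h1, h2⟩
      conv_lhs => rw [fin2_decomp e]
      rw [← h1, ← h2]
  have hpow : ∀ n, MvPowerSeries.coeff e ((MvPowerSeries.X (0:Fin 2) + MvPowerSeries.X 1) ^ n)
      = ∑ m ∈ Finset.range (n+1),
          (if e = Finsupp.single 0 m + Finsupp.single 1 (n - m)
            then ((n.choose m : ℕ) : R) else 0) := by
    intro n
    rw [add_pow, map_sum]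
    apply Finset.sum_congr rfl
    intro m _
    rw [mul_comm _ ((n.choose m : MvPowerSeries (Fin 2) R)),
      show ((n.choose m : ℕ) : MvPowerSeries (Fin 2) R)
          = MvPowerSeries.C (σ := Fin 2) (R := R) ((n.choose m : ℕ) : R) from (map_natCast _ _).symm,
      MvPowerSeries.coeff_C_mul, MvPowerSeries.X_pow_eq, MvPowerSeries.X_pow_eq,
      MvPowerSeries.monomial_mul_monomial, MvPowerSeries.coeff_monomial]
    split_ifs <;> simp
  rw [coeff_psubst]
  rw [Finset.sum_eq_single_of_mem (e 0 + e 1) (Finset.self_mem_range_succ _)]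
  · rw [hpow]
    rw [Finset.sum_eq_single_of_mem (e 0) (by rw [Finset.mem_range]; omega)]
    · rw [if_pos ((hkey _ _).mpr ⟨rfl, by omega⟩)]
      ring
    · intro m _ hm
      rw [if_neg]
      intro h
      exact hm ((hkey _ _).mp h).1
  · intro n _ hn
    rw [hpow, Finset.mul_sum]
    apply Finset.sum_eq_zero
    intro m hmr
    rw [Finset.mem_range, Nat.lt_succ_iff] at hmr
    rw [if_neg, mul_zero]
    intro h
    obtain ⟨h1, h2⟩ := (hkey n m).mp h
    exact hn (by omega)

variable [Algebra ℚ R]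

lemma rhs_coeff (a : R) (e : Fin 2 →₀ ℕ) :
    MvPowerSeries.coeff e
      (embed 0 (binomSeries a) * embed 1 (binomSeries a) *
        psubst (embed 0 (geomSeries : PowerSeries R) * embed 1 geomSeries) (binomSeries a))
      = ∑ n ∈ Finset.range (e 0 + e 1 + 1),
          PowerSeries.coeff n (binomSeries a)
            * (PowerSeries.coeff (e 0) (binomSeries a * geomSeries ^ n)
               * PowerSeries.coeff (e 1) (binomSeries a * geomSeries ^ n)) := by
  classical
  rw [MvPowerSeries.coeff_mul]
  have hGG : ∀ n : ℕ, (embed 0 (geomSeries : PowerSeries R) * embed 1 geomSeries) ^ n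
      = embed 0 ((geomSeries : PowerSeries R) ^ n) * embed 1 (geomSeries ^ n) := by
    intro n
    rw [mul_pow, E0_pow, E1_pow]
  have hterm : ∀ p ∈ Finset.HasAntidiagonal.antidiagonal e,
      MvPowerSeries.coeff p.1 (embed 0 (binomSeries a) * embed 1 (binomSeries a))
        * MvPowerSeries.coeff p.2
            (psubst (embed 0 (geomSeries : PowerSeries R) * embed 1 geomSeries) (binomSeries a))
      = ∑ n ∈ Finset.range (e 0 + e 1 + 1),
          PowerSeries.coeff n (binomSeries a) *
            ((PowerSeries.coeff (p.1 0) (binomSeries a)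
                * PowerSeries.coeff (p.2 0) ((geomSeries : PowerSeries R) ^ n))
             * (PowerSeries.coeff (p.1 1) (binomSeries a)
                * PowerSeries.coeff (p.2 1) ((geomSeries : PowerSeries R) ^ n))) := by
    intro p hp
    rw [Finset.HasAntidiagonal.mem_antidiagonal] at hp
    have h0 : p.1 0 + p.2 0 = e 0 := by
      have := DFunLike.congr_fun hp (0 : Fin 2); simpa using this
    have h1 : p.1 1 + p.2 1 = e 1 := by
      have := DFunLike.congr_fun hp (1 : Fin 2); simpa using this
    rw [coeff_E0_mul_E1, coeff_psubst]
    have hsub : Finset.range (p.2 0 + p.2 1 + 1) ⊆ Finset.range (e 0 + e 1 + 1) := by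
      apply Finset.range_subset_range.mpr; omega
    rw [← Finset.sum_subset hsub]
    · rw [Finset.mul_sum]
      apply Finset.sum_congr rfl
      intro n _
      rw [hGG, coeff_E0_mul_E1]
      ring
    · intro n _ hn
      rw [Finset.mem_range, Nat.lt_succ_iff] at hn
      have : PowerSeries.coeff (p.2 0) ((geomSeries : PowerSeries R) ^ n) = 0
          ∨ PowerSeries.coeff (p.2 1) ((geomSeries : PowerSeries R) ^ n) = 0 := by
        rcases Nat.lt_or_ge (p.2 0) n with h | h
        · exact Or.inl (coeff_geom_pow_zero n _ h)
        · exact Or.inr (coeff_geom_pow_zero n _ (by omega))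
      rcases this with h | h <;> rw [h] <;> ring
  rw [Finset.sum_congr rfl hterm, Finset.sum_comm]
  apply Finset.sum_congr rfl
  intro n _
  rw [← Finset.mul_sum]
  congr 1
  rw [antidiag_split e
    (fun x y => PowerSeries.coeff x (binomSeries a)
      * PowerSeries.coeff y ((geomSeries : PowerSeries R) ^ n))
    (fun x y => PowerSeries.coeff x (binomSeries a)
      * PowerSeries.coeff y ((geomSeries : PowerSeries R) ^ n)),
    ← PowerSeries.coeff_mul, ← PowerSeries.coeff_mul]

end Assemble

section FinalScalar
variable [Algebra ℚ R]

lemma qsmul_of_ncast (c : ℕ) (x : R) : ((c : ℚ)) • x = (c : R) * x := by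
  rw [Nat.cast_smul_eq_nsmul, nsmul_eq_mul]

lemma final_scalar (i j : ℕ) (a : R) :
    (((i+j).choose i : ℕ) : R) * ((((i+j).factorial : ℚ))⁻¹ • (ascPochhammer R (i+j)).eval a)
      = ∑ n ∈ Finset.range (i+j+1),
          (((n.factorial : ℚ))⁻¹ • (ascPochhammer R n).eval a)
          * ((if n ≤ i then (((i-n).factorial : ℚ))⁻¹ • (ascPochhammer R (i-n)).eval (a+n) else 0)
             * (if n ≤ j then (((j-n).factorial : ℚ))⁻¹ • (ascPochhammer R (j-n)).eval (a+n) else 0)) := by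
  have hd2 : (ascPochhammer R (i+j)).eval a
      = ∑ n ∈ Finset.range (i+j+1), ((i.choose n * j.choose n * n.factorial : ℕ) : R) *
          ((ascPochhammer R n).eval a * (ascPochhammer R (i-n)).eval (a+n) *
           (ascPochhammer R (j-n)).eval (a+n)) := by
    rw [diamond j i a]
    apply Finset.sum_subset (Finset.range_subset_range.mpr (by omega))
    intro x hx hx2
    rw [Finset.mem_range] at hx hx2
    have : j.choose x = 0 := Nat.choose_eq_zero_of_lt (by omega)
    simp [this]
  rw [hd2, Finset.smul_sum, Finset.mul_sum]
  apply Finset.sum_congr rfl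
  intro n _
  by_cases hni : n ≤ i
  · by_cases hnj : n ≤ j
    · rw [if_pos hni, if_pos hnj]
      rw [smul_mul_smul_comm, smul_mul_smul_comm]
      rw [← qsmul_of_ncast ((i+j).choose i), smul_smul,
        ← qsmul_of_ncast (i.choose n * j.choose n * n.factorial), smul_smul]
      rw [mul_assoc ((ascPochhammer R n).eval a)]
      congr 1
      have e0 := Nat.choose_mul_factorial_mul_factorial (show i ≤ i+j by omega)
      have hij : i + j - i = j := by omega
      rw [hij] at e0
      have e1 := Nat.choose_mul_factorial_mul_factorial hni
      have e2 := Nat.choose_mul_factorial_mul_factorial hnj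
      have hnat : (i+j).choose i * (i.choose n * j.choose n * n.factorial)
            * (n.factorial * ((i-n).factorial * (j-n).factorial))
          = (i+j).factorial := by
        calc (i+j).choose i * (i.choose n * j.choose n * n.factorial)
              * (n.factorial * ((i-n).factorial * (j-n).factorial))
            = (i+j).choose i * ((i.choose n * n.factorial * (i-n).factorial)
                * (j.choose n * n.factorial * (j-n).factorial)) := by ring
          _ = (i+j).choose i * (i.factorial * j.factorial) := by rw [e1, e2]
          _ = (i+j).factorial := by rw [← e0]; ring
      have h1 : ((i+j).factorial : ℚ) ≠ 0 := Nat.cast_ne_zero.mpr (Nat.factorial_ne_zero _)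
      have h2 : ((n.factorial : ℕ) : ℚ) ≠ 0 := Nat.cast_ne_zero.mpr (Nat.factorial_ne_zero _)
      have h3 : (((i-n).factorial : ℕ) : ℚ) ≠ 0 := Nat.cast_ne_zero.mpr (Nat.factorial_ne_zero _)
      have h4 : (((j-n).factorial : ℕ) : ℚ) ≠ 0 := Nat.cast_ne_zero.mpr (Nat.factorial_ne_zero _)
      have hnatq : (((i+j).choose i : ℕ) : ℚ) * ((i.choose n * j.choose n * n.factorial : ℕ) : ℚ)
            * ((n.factorial : ℕ) * (((i-n).factorial : ℕ) * ((j-n).factorial : ℕ)) : ℚ)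
          = ((i+j).factorial : ℚ) := by exact_mod_cast congrArg (Nat.cast (R := ℚ)) hnat
      field_simp
      push_cast at hnatq ⊢
      linarith [hnatq]
    · have : j.choose n = 0 := Nat.choose_eq_zero_of_lt (by omega)
      rw [if_neg hnj, this]
      simp
  · have : i.choose n = 0 := Nat.choose_eq_zero_of_lt (by omega)
    rw [if_neg hni, this]
    simp

end FinalScalar


end Aux

/-- Addition formula for rising powers: in the formal power series ring in two
variables `t, u`, `(1−t−u)^{−a} = (1−t)^{−a}·(1−u)^{−a}·Σ_k C(a+k−1,k)·(t/(1−t))^k·(u/(1−u))^k`,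
where `C(a+k−1,k) = a⁽ᵏ⁾/k!`, so the last factor is the series
`(1−s)^{−a}` evaluated at `s = (t/(1−t))·(u/(1−u))`. -/
theorem binomSeries_addition [CommRing R] [Algebra ℚ R] (a : R) :
    psubst (MvPowerSeries.X 0 + MvPowerSeries.X 1) (binomSeries a) =
      embed 0 (binomSeries a) * embed 1 (binomSeries a) *
        psubst (embed 0 geomSeries * embed 1 geomSeries) (binomSeries a) := by
  apply MvPowerSeries.ext
  intro e
  rw [psubst_add_coeff, rhs_coeff, binom_coeff]
  have hc : ∀ n ∈ Finset.range (e 0 + e 1 + 1),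
      PowerSeries.coeff n (binomSeries a)
        * (PowerSeries.coeff (e 0) (binomSeries a * (geomSeries : PowerSeries R) ^ n)
           * PowerSeries.coeff (e 1) (binomSeries a * (geomSeries : PowerSeries R) ^ n))
      = (((n.factorial : ℚ))⁻¹ • (ascPochhammer R n).eval a)
          * ((if n ≤ e 0 then (((e 0 - n).factorial : ℚ))⁻¹ • (ascPochhammer R (e 0 - n)).eval (a+n) else 0)
             * (if n ≤ e 1 then (((e 1 - n).factorial : ℚ))⁻¹ • (ascPochhammer R (e 1 - n)).eval (a+n) else 0)) := by
    intro n _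
    rw [binom_coeff, coeff_binom_mul_geom_pow, coeff_binom_mul_geom_pow]
  rw [Finset.sum_congr rfl hc, ← final_scalar]
end

section
/- Define Bell-polynomial arrays g_{2j-1}(t) = Σ_{n≥0} (Σ_{k=0}^n S(n+j,k+j)·C(k+j−1,k)·x^k·y^{n−k})·t^n and g_{2j}(t) = Σ_{n≥0} (Σ_{k=0}^n S(n+j,k+j)·C(k+j,k)·x^k·y^{n−k})·t^n as formal power series over ℚ[x,y], with g_{-1} = 1, and set α_{2k-1} = x, α_{2k} = k·y. Then for all k ≥ 0, g_k(t) − g_{k-1}(t) = α_{k+1}·t·g_{k+1}(t). -/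
open PowerSeries

/-- Stirling numbers of the second kind. -/
def stirling2 : ℕ → ℕ → ℕ
  | 0, k => if k = 0 then 1 else 0
  | _ + 1, 0 => 0
  | n + 1, k + 1 => (k + 1) * stirling2 n (k + 1) + stirling2 n k

/-- The polynomial ring `ℚ[x,y]`, with `x = X 0` and `y = X 1`. -/
abbrev Rxy : Type := MvPolynomial (Fin 2) ℚ

/-- The series `g_k` of the Euler–Gauss recurrence for the Bell polynomials:
for `k = 2j-1` (odd), the coefficient of `tⁿ` is
`Σ_{i=0}^n S(n+j,i+j)·C(i+j−1,i)·xⁱ·y^{n−i}`, and for `k = 2j` (even) it is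
`Σ_{i=0}^n S(n+j,i+j)·C(i+j,i)·xⁱ·y^{n−i}`.  The odd formula with `j = 0`
(`k = -1`) gives the constant series `1`. -/
noncomputable def bellG (k : ℤ) : PowerSeries Rxy :=
  PowerSeries.mk fun n =>
    letI j : ℕ := ((k + 1) / 2).toNat
    ∑ i ∈ Finset.range (n + 1),
      (stirling2 (n + j) (i + j) : Rxy) *
        ((if k % 2 = 0 then Nat.choose (i + j) i else Nat.choose (i + j - 1) i : ℕ) : Rxy) *
        MvPolynomial.X 0 ^ i * MvPolynomial.X 1 ^ (n - i)

/-- The coefficients `α_{2k-1} = x`, `α_{2k} = k·y`. -/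
noncomputable def bellAlpha (i : ℤ) : Rxy :=
  if i % 2 = 0 then ((i / 2 : ℤ) : Rxy) * MvPolynomial.X 1
  else MvPolynomial.X 0

lemma stirling2_succ (n k : ℕ) :
    stirling2 (n + 1) (k + 1) = (k + 1) * stirling2 n (k + 1) + stirling2 n k := rfl

lemma stirling2_eq_zero : ∀ {n k : ℕ}, n < k → stirling2 n k = 0
  | 0, k, h => by
    rw [show stirling2 0 k = if k = 0 then 1 else 0 from rfl, if_neg (by omega)]
  | n + 1, k + 1, h => by
    rw [stirling2_succ, stirling2_eq_zero (by omega), stirling2_eq_zero (by omega)]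
    simp

lemma stirling2_self : ∀ n : ℕ, stirling2 n n = 1
  | 0 => rfl
  | n + 1 => by
    rw [stirling2_succ, stirling2_self n, stirling2_eq_zero (by omega)]
    simp

/-- Even-index coefficients. -/
noncomputable def evA (j n : ℕ) : Rxy :=
  ∑ i ∈ Finset.range (n + 1),
    (stirling2 (n + j) (i + j) : Rxy) * (Nat.choose (i + j) i : Rxy) *
      MvPolynomial.X 0 ^ i * MvPolynomial.X 1 ^ (n - i)

/-- Odd-index coefficients. -/
noncomputable def odB (j n : ℕ) : Rxy :=
  ∑ i ∈ Finset.range (n + 1),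
    (stirling2 (n + j) (i + j) : Rxy) * (Nat.choose (i + j - 1) i : Rxy) *
      MvPolynomial.X 0 ^ i * MvPolynomial.X 1 ^ (n - i)

lemma bellG_even (j : ℕ) (k : ℤ) (h : k = 2 * j) : bellG k = PowerSeries.mk (evA j) := by
  subst h
  unfold bellG evA
  funext n
  have h1 : ((2 * (j : ℤ) + 1) / 2).toNat = j := by omega
  have h2 : (2 * (j : ℤ)) % 2 = 0 := by omega
  simp only [h1, if_pos h2]

lemma bellG_odd (j : ℕ) (k : ℤ) (h : k = 2 * j - 1) : bellG k = PowerSeries.mk (odB j) := by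
  subst h
  unfold bellG odB
  funext n
  have h1 : ((2 * (j : ℤ) - 1 + 1) / 2).toNat = j := by omega
  have h2 : ¬ (2 * (j : ℤ) - 1) % 2 = 0 := by omega
  simp only [h1, if_neg h2]

lemma key_even_s19 (j n : ℕ) :
    evA j (n + 1) - odB j (n + 1) = MvPolynomial.X 0 * odB (j + 1) n := by
  unfold evA odB
  rw [Finset.sum_range_succ' _ (n + 1), Finset.sum_range_succ' _ (n + 1)]
  have h0 : (stirling2 (n + 1 + j) (0 + j) : Rxy) * (Nat.choose (0 + j) 0 : Rxy) *
      MvPolynomial.X 0 ^ 0 * MvPolynomial.X 1 ^ (n + 1 - 0) =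
      (stirling2 (n + 1 + j) (0 + j) : Rxy) * (Nat.choose (0 + j - 1) 0 : Rxy) *
      MvPolynomial.X 0 ^ 0 * MvPolynomial.X 1 ^ (n + 1 - 0) := by
    simp
  rw [h0, add_sub_add_right_eq_sub, ← Finset.sum_sub_distrib, Finset.mul_sum]
  refine Finset.sum_congr rfl fun i hi => ?_
  have hin : i ≤ n := by simpa using Nat.lt_succ_iff.mp (Finset.mem_range.mp hi)
  have e1 : n + 1 + j = (n + j + 1) := by omega
  have e2 : i + 1 + j = (i + j) + 1 := by omega
  have e3 : i + 1 + j - 1 = i + j := by omega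
  have e4 : n + 1 - (i + 1) = n - i := by omega
  have e5 : n + (j + 1) = n + j + 1 := by omega
  have e6 : i + (j + 1) = (i + j) + 1 := by omega
  have e7 : i + (j + 1) - 1 = i + j := by omega
  rw [e3, e7, e1, e2, e4, e5, e6]
  have hc : (Nat.choose (i + j + 1) (i + 1) : Rxy) =
      (Nat.choose (i + j) i : Rxy) + (Nat.choose (i + j) (i + 1) : Rxy) := by
    rw [← Nat.cast_add, Nat.choose_succ_succ']
  rw [hc, pow_succ]
  ring

lemma key_odd_s19 (j n : ℕ) :
    odB (j + 1) (n + 1) - evA j (n + 1) =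
      ((j : Rxy) + 1) * MvPolynomial.X 1 * evA (j + 1) n := by
  unfold odB evA
  rw [← Finset.sum_sub_distrib, Finset.sum_range_succ, Finset.mul_sum]
  have htop : (stirling2 (n + 1 + (j + 1)) (n + 1 + (j + 1)) : Rxy) *
      (Nat.choose (n + 1 + (j + 1) - 1) (n + 1) : Rxy) * MvPolynomial.X 0 ^ (n + 1) *
      MvPolynomial.X 1 ^ (n + 1 - (n + 1)) -
      (stirling2 (n + 1 + j) (n + 1 + j) : Rxy) * (Nat.choose (n + 1 + j) (n + 1) : Rxy) *
      MvPolynomial.X 0 ^ (n + 1) * MvPolynomial.X 1 ^ (n + 1 - (n + 1)) = 0 := by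
    have e1 : n + 1 + (j + 1) = (n + 1 + j) + 1 := by omega
    rw [e1, stirling2_succ, show (n + 1 + j) + 1 - 1 = n + 1 + j from by omega,
      stirling2_eq_zero (by omega)]
    push_cast
    ring
  rw [htop, add_zero]
  refine Finset.sum_congr rfl fun i hi => ?_
  have hin : i ≤ n := Nat.lt_succ_iff.mp (Finset.mem_range.mp hi)
  have e1 : n + 1 + (j + 1) = (n + j + 1) + 1 := by omega
  have e2 : i + (j + 1) = (i + j) + 1 := by omega
  have e3 : i + (j + 1) - 1 = i + j := by omega
  have e4 : n + 1 + j = n + j + 1 := by omega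
  have e5 : n + (j + 1) = n + j + 1 := by omega
  have e6 : n + 1 - i = (n - i) + 1 := by omega
  rw [e3, e2, e1, e4, e5, e6, stirling2_succ]
  have hb : ((j : Rxy) + 1) * (Nat.choose (i + j + 1) i : Rxy) =
      ((i : Rxy) + (j : Rxy) + 1) * (Nat.choose (i + j) i : Rxy) := by
    have hn : (j + 1) * Nat.choose (i + j + 1) i = (i + j + 1) * Nat.choose (i + j) i := by
      have h1 := Nat.add_one_mul_choose_eq (i + j) j
      have h2 : Nat.choose (i + j) j = Nat.choose (i + j) i := by
        rw [Nat.add_comm i j]; exact Nat.choose_symm_add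
      have h3 : Nat.choose (i + j + 1) (j + 1) = Nat.choose (i + j + 1) i := by
        rw [show i + j + 1 = (j + 1) + i from by omega]; exact Nat.choose_symm_add
      rw [h2, h3] at h1
      try simp only [Nat.succ_eq_add_one] at h1
      linarith [h1]
    calc ((j : Rxy) + 1) * (Nat.choose (i + j + 1) i : Rxy)
        = ((j + 1) * Nat.choose (i + j + 1) i : ℕ) := by push_cast; ring
      _ = ((i + j + 1) * Nat.choose (i + j) i : ℕ) := by rw [hn]
      _ = ((i : Rxy) + (j : Rxy) + 1) * (Nat.choose (i + j) i : Rxy) := by push_cast; ring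
  have expand : ((j : Rxy) + 1) * MvPolynomial.X 1 *
      ((stirling2 (n + j + 1) (i + j + 1) : Rxy) * (Nat.choose (i + j + 1) i : Rxy) *
        MvPolynomial.X 0 ^ i * MvPolynomial.X 1 ^ (n - i)) =
      (((j : Rxy) + 1) * (Nat.choose (i + j + 1) i : Rxy)) *
        ((stirling2 (n + j + 1) (i + j + 1) : Rxy) *
        MvPolynomial.X 0 ^ i * MvPolynomial.X 1 ^ ((n - i) + 1)) := by
    rw [pow_succ]; ring
  rw [expand, hb]
  push_cast
  ring

lemma series_even (j : ℕ) :
    PowerSeries.mk (evA j) - PowerSeries.mk (odB j) =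
      PowerSeries.C (R := Rxy) (MvPolynomial.X 0) * PowerSeries.X * PowerSeries.mk (odB (j + 1)) := by
  refine PowerSeries.ext fun n => ?_
  rw [map_sub, coeff_mk, coeff_mk, mul_assoc, coeff_C_mul]
  cases n with
  | zero =>
    rw [coeff_zero_X_mul, mul_zero]
    simp [evA, odB, stirling2_self]
  | succ n =>
    rw [coeff_succ_X_mul, coeff_mk]
    exact key_even_s19 j n

lemma series_odd (j : ℕ) :
    PowerSeries.mk (odB (j + 1)) - PowerSeries.mk (evA j) =
      PowerSeries.C (R := Rxy) (((j : Rxy) + 1) * MvPolynomial.X 1) * PowerSeries.X *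
        PowerSeries.mk (evA (j + 1)) := by
  refine PowerSeries.ext fun n => ?_
  rw [map_sub, coeff_mk, coeff_mk, mul_assoc, coeff_C_mul]
  cases n with
  | zero =>
    rw [coeff_zero_X_mul, mul_zero]
    simp [evA, odB, stirling2_self]
  | succ n =>
    rw [coeff_succ_X_mul, coeff_mk]
    exact key_odd_s19 j n

/-- Euler–Gauss recurrence for the Bell polynomials: `g_{-1} = 1` and, for all
`k ≥ 0`, `g_k(t) − g_{k-1}(t) = α_{k+1}·t·g_{k+1}(t)`. -/
theorem bellG_recurrence :
    (bellG (-1) = 1) ∧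
    ∀ k : ℤ, 0 ≤ k →
      bellG k - bellG (k - 1) =
        PowerSeries.C (R := Rxy) (bellAlpha (k + 1)) * PowerSeries.X * bellG (k + 1) := by
  constructor
  · rw [bellG_odd 0 (-1) (by norm_num)]
    refine PowerSeries.ext fun n => ?_
    rw [coeff_mk, coeff_one]
    unfold odB
    rw [Finset.sum_range_succ']
    rw [Finset.sum_eq_zero (fun i _ => by
      simp [show i + 1 + 0 - 1 = i from by omega, Nat.choose_succ_self]), zero_add]
    cases n with
    | zero => simp [stirling2]
    | succ n => simp [show stirling2 (n + 1) 0 = 0 from rfl]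
  · intro k hk
    obtain ⟨j, hj | hj⟩ : ∃ j : ℕ, k = 2 * j ∨ k = 2 * j + 1 := ⟨(k / 2).toNat, by omega⟩
    · rw [bellG_even j k hj, bellG_odd j (k - 1) (by omega),
        bellG_odd (j + 1) (k + 1) (by push_cast; omega)]
      have hα : bellAlpha (k + 1) = MvPolynomial.X 0 := by
        unfold bellAlpha
        rw [if_neg (by omega)]
      rw [hα]
      exact series_even j
    · rw [bellG_odd (j + 1) k (by push_cast; omega), bellG_even j (k - 1) (by omega),
        bellG_even (j + 1) (k + 1) (by push_cast; omega)]
      have hα : bellAlpha (k + 1) = ((j : Rxy) + 1) * MvPolynomial.X 1 := by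
        unfold bellAlpha
        rw [if_pos (by omega), show (k + 1) / 2 = (j : ℤ) + 1 from by omega]
        push_cast
        ring
      rw [hα]
      exact series_odd j
end
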